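/- Let {(x_i, g_i, f_i)}_{i∈I} be a finite set of triples in E × E × ℝ. There exists a closed convex set Q ⊆ E (with indicator function I_Q, taking value 0 on Q and +∞ outside) such that x_i ∈ Q, I_Q(x_i) = f_i, and g_i is a subgradient of I_Q at x_i for all i ∈ I, if and only if for all i, j ∈ I: f_i = 0 and ⟨g_j, x_i − x_j⟩ ≤ 0. -/

import Mathlib

/-- Interpolation by the indicator function of a closed convex set `Q`: the data
`(x_i, g_i, f_i)` is interpolable (with `x_i ∈ Q`, `I_Q(x_i) = f_i` and `g_i` in the
normal cone of `Q` at `x_i`, which characterizes subgradients of the indicator) iff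
`f_i = 0` and `⟨g_j, x_i − x_j⟩ ≤ 0` for all `i, j`. -/
theorem stmt5 {E : Type*} [NormedAddCommGroup E] [InnerProductSpace ℝ E]
    [FiniteDimensional ℝ E] {ι : Type*} [Fintype ι] (x g : ι → E) (f : ι → ℝ) :
    (∃ Q : Set E, IsClosed Q ∧ Convex ℝ Q ∧
        ∀ i, x i ∈ Q ∧ f i = 0 ∧ ∀ y ∈ Q, (inner ℝ (g i) (y - x i) : ℝ) ≤ 0) ↔
      ∀ i j, f i = 0 ∧ (inner ℝ (g j) (x i - x j) : ℝ) ≤ 0 := by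
  constructor
  · rintro ⟨Q, _, _, hQ⟩ i j
    exact ⟨(hQ i).2.1, (hQ j).2.2 (x i) (hQ i).1⟩
  · intro h
    refine ⟨⋂ j, {y : E | (inner ℝ (g j) (y - x j) : ℝ) ≤ 0}, ?_, ?_, ?_⟩
    · exact isClosed_iInter fun j => isClosed_le (by exact (continuous_const.inner (continuous_id.sub continuous_const))) continuous_const
    · refine convex_iInter fun j => ?_
      have : {y : E | (inner ℝ (g j) (y - x j) : ℝ) ≤ 0}
          = {y : E | (inner ℝ (g j) y : ℝ) ≤ inner ℝ (g j) (x j)} := by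
        ext y; simp [inner_sub_right, sub_nonpos]
      rw [this]
      exact convex_halfSpace_le ⟨fun a b => inner_add_right _ _ _,
        fun c a => real_inner_smul_right _ _ _⟩ _
    · intro i
      refine ⟨Set.mem_iInter.2 fun j => (h i j).2, (h i i).1, fun y hy => ?_⟩
      exact Set.mem_iInter.1 hy i
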